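/- Let G : ℝ → [0, ∞) be continuous with G(0) = 0, G(p) > 0 for p ≠ 0, G coercive (G(p) → +∞ as |p| → +∞), and suppose the restriction G₂ of G to [0, ∞) has finitely many local extrema at 0 < p₁ < … < p_{2N}, where M := max of the local maxima values M_i = G(p_{2i-1}) and m := min of the local minima values m_j = G(p_{2j}). Define the right inverses G̲₂⁻¹(λ) := min{p ≥ 0 : G(p) = λ} and Ḡ₂⁻¹(λ) := max{p ≥ 0 : G(p) = λ} for λ ≥ 0. If β > M - m, then for every λ ≥ β one has Ḡ₂⁻¹(λ - β) < G̲₂⁻¹(λ). -/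

import Mathlib

open Set Filter

/-- If `β > M - m`, then for every `λ ≥ β` the larger right inverse of `G` on `[0,∞)` at
level `λ - β` lies strictly below the smaller right inverse at level `λ`.
Here `G` restricted to `[0,∞)` has exactly `2N` interior local extrema at
`0 < p 1 < … < p (2N)`, encoded by alternating strict monotonicity on the segments
`[p i, p (i+1)]` (with `p 0 = 0`) and on `[p (2N), ∞)`. -/
theorem stmt7
    (G : ℝ → ℝ) (hGc : Continuous G)
    (hG0 : G 0 = 0) (hGpos : ∀ p : ℝ, p ≠ 0 → 0 < G p)
    (hcoer_top : Tendsto G atTop atTop) (hcoer_bot : Tendsto G atBot atTop)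
    (N : ℕ) (hN : 1 ≤ N) (p : ℕ → ℝ)
    (hp0 : p 0 = 0) (hpmono : ∀ i < 2 * N, p i < p (i + 1))
    (hinc : ∀ i < 2 * N, i % 2 = 0 → StrictMonoOn G (Icc (p i) (p (i + 1))))
    (hdec : ∀ i < 2 * N, i % 2 = 1 → StrictAntiOn G (Icc (p i) (p (i + 1))))
    (hlast : StrictMonoOn G (Ici (p (2 * N))))
    (M m : ℝ)
    (hM : IsGreatest ((fun j => G (p (2 * j + 1))) '' {j : ℕ | j < N}) M)
    (hm : IsLeast ((fun j => G (p (2 * j + 2))) '' {j : ℕ | j < N}) m)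
    (β : ℝ) (hβ : M - m < β) :
    ∀ lam : ℝ, β ≤ lam →
      sSup {q : ℝ | 0 ≤ q ∧ G q = lam - β} < sInf {q : ℝ | 0 ≤ q ∧ G q = lam} := by
  -- p is increasing up to index 2N
  have hple : ∀ j, j ≤ 2 * N → ∀ i, i ≤ j → p i ≤ p j := by
    intro j
    induction j with
    | zero => intro _ i hi; interval_cases i; exact le_refl _
    | succ k ih =>
      intro hk i hi
      rcases Nat.lt_or_ge i (k + 1) with h | h
      · exact le_trans (ih (by omega) i (by omega)) (le_of_lt (hpmono k (by omega)))
      · have : i = k + 1 := by omega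
        subst this; exact le_refl _
  have hp1pos : 0 < p 1 := by
    have := hpmono 0 (by omega)
    rwa [hp0] at this
  -- endpoint lower bounds by m
  have hEmEven : ∀ j, j < N → m ≤ G (p (2 * j + 2)) := fun j hj => hm.2 ⟨j, hj, rfl⟩
  have hEm : ∀ i, 1 ≤ i → i ≤ 2 * N → m ≤ G (p i) := by
    intro i h1 h2
    rcases Nat.even_or_odd i with ⟨j, hj⟩ | ⟨j, hj⟩
    · have hj1 : 1 ≤ j := by omega
      have : i = 2 * (j - 1) + 2 := by omega
      rw [this]; exact hEmEven (j - 1) (by omega)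
    · have hi2N : i < 2 * N := by omega
      have hodd : i % 2 = 1 := by omega
      have h1' : m ≤ G (p (i + 1)) := by
        have : i + 1 = 2 * j + 2 := by omega
        rw [this]; exact hEmEven j (by omega)
      have h2' : G (p (i + 1)) < G (p i) :=
        hdec i hi2N hodd ⟨le_refl _, (hpmono i hi2N).le⟩
          ⟨(hpmono i hi2N).le, le_refl _⟩ (hpmono i hi2N)
      linarith
  -- endpoint upper bounds by M
  have hEModd : ∀ j, j < N → G (p (2 * j + 1)) ≤ M := fun j hj => hM.2 ⟨j, hj, rfl⟩
  have hMpos : 0 < M := by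
    obtain ⟨j, hj, hjM⟩ := hM.1
    have hjN : j < N := hj
    have hpj : 0 < p (2 * j + 1) :=
      lt_of_lt_of_le hp1pos (hple (2 * j + 1) (by omega) 1 (by omega))
    have := hGpos (p (2 * j + 1)) (ne_of_gt hpj)
    simp only at hjM
    linarith
  have hEM : ∀ i, i ≤ 2 * N → G (p i) ≤ M := by
    intro i h2
    rcases Nat.eq_zero_or_pos i with h0 | h0
    · subst h0; rw [hp0, hG0]; linarith
    rcases Nat.even_or_odd i with ⟨j, hj⟩ | ⟨j, hj⟩
    · -- i even, i ≥ 2, so i = (i-1) + 1 with i-1 odd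
      have hk : i - 1 < 2 * N := by omega
      have hkodd : (i - 1) % 2 = 1 := by omega
      have h2' : G (p (i - 1 + 1)) < G (p (i - 1)) :=
        hdec (i - 1) hk hkodd ⟨le_refl _, (hpmono _ hk).le⟩
          ⟨(hpmono _ hk).le, le_refl _⟩ (hpmono _ hk)
      have h1' : G (p (i - 1)) ≤ M := by
        have : i - 1 = 2 * (j - 1) + 1 := by omega
        rw [this]; exact hEModd (j - 1) (by omega)
      have : i - 1 + 1 = i := by omega
      rw [this] at h2'
      linarith
    · have : i = 2 * j + 1 := by omega
      rw [this]; exact hEModd j (by omega)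
  -- G ≥ m on [p 1, p k]
  have hLm : ∀ k, k ≤ 2 * N → ∀ q, p 1 ≤ q → q ≤ p k → m ≤ G q := by
    intro k
    induction k with
    | zero =>
      intro _ q hq1 hq2
      have : p 0 < p 1 := hpmono 0 (by omega)
      linarith
    | succ k ih =>
      intro h2 q hq1 hq2
      rcases Nat.eq_zero_or_pos k with h0 | h0
      · subst h0
        have hq : q = p 1 := le_antisymm hq2 hq1
        rw [hq]; exact hEm 1 le_rfl (by omega)
      rcases le_or_gt q (p k) with h | h
      · exact ih (by omega) q hq1 h
      · have hk2N : k < 2 * N := by omega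
        rcases Nat.even_or_odd k with ⟨j, hj⟩ | ⟨j, hj⟩
        · have hinc' := hinc k hk2N (by omega)
          have : G (p k) ≤ G q :=
            hinc'.monotoneOn ⟨le_refl _, (hpmono k hk2N).le⟩ ⟨h.le, hq2⟩ h.le
          have : m ≤ G (p k) := hEm k (by omega) (by omega)
          have : G (p k) ≤ G q :=
            hinc'.monotoneOn ⟨le_refl _, (hpmono k hk2N).le⟩ ⟨h.le, hq2⟩ h.le
          linarith
        · have hdec' := hdec k hk2N (by omega)
          have h1' : G (p (k + 1)) ≤ G q :=
            hdec'.antitoneOn ⟨h.le, hq2⟩ ⟨(hpmono k hk2N).le, le_refl _⟩ hq2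
          have h2' : m ≤ G (p (k + 1)) := hEm (k + 1) (by omega) (by omega)
          linarith
  have hm_right : ∀ q, p 1 ≤ q → m ≤ G q := by
    intro q hq
    rcases le_or_gt q (p (2 * N)) with h | h
    · exact hLm (2 * N) le_rfl q hq h
    · have h1' : G (p (2 * N)) ≤ G q :=
        (hlast.monotoneOn) (Set.mem_Ici.mpr (le_refl _)) (Set.mem_Ici.mpr h.le) h.le
      have h2' : m ≤ G (p (2 * N)) := hEm (2 * N) (by omega) le_rfl
      linarith
  -- G ≤ M on [0, p (2N)]
  have hLM : ∀ k, k ≤ 2 * N → ∀ q, 0 ≤ q → q ≤ p k → G q ≤ M := by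
    intro k
    induction k with
    | zero =>
      intro _ q hq1 hq2
      rw [hp0] at hq2
      have : q = 0 := le_antisymm hq2 hq1
      rw [this, hG0]; linarith
    | succ k ih =>
      intro h2 q hq1 hq2
      rcases le_or_gt q (p k) with h | h
      · exact ih (by omega) q hq1 h
      · have hk2N : k < 2 * N := by omega
        rcases Nat.even_or_odd k with ⟨j, hj⟩ | ⟨j, hj⟩
        · have hinc' := hinc k hk2N (by omega)
          have h1' : G q ≤ G (p (k + 1)) :=
            hinc'.monotoneOn ⟨h.le, hq2⟩ ⟨(hpmono k hk2N).le, le_refl _⟩ hq2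
          have h2' : G (p (k + 1)) ≤ M := hEM (k + 1) (by omega)
          linarith
        · have hdec' := hdec k hk2N (by omega)
          have h1' : G q ≤ G (p k) :=
            hdec'.antitoneOn ⟨le_refl _, (hpmono k hk2N).le⟩ ⟨h.le, hq2⟩ h.le
          have h2' : G (p k) ≤ M := hEM k (by omega)
          linarith
  -- level set facts
  have hmM : m ≤ M := by
    have h1' : m ≤ G (p 2) := hEm 2 (by omega) (by omega)
    have h2' : G (p 2) ≤ M := hEM 2 (by omega)
    linarith
  have hβpos : 0 < β := by linarith
  have hmpos : 0 < m := by
    obtain ⟨j, hj, hjm⟩ := hm.1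
    have hjN : j < N := hj
    have hpj : 0 < p (2 * j + 2) :=
      lt_of_lt_of_le hp1pos (hple (2 * j + 2) (by omega) 1 (by omega))
    have := hGpos (p (2 * j + 2)) (ne_of_gt hpj)
    simp only at hjm
    linarith
  have hlevel : ∀ c : ℝ, 0 ≤ c →
      (Set.Nonempty {q : ℝ | 0 ≤ q ∧ G q = c}) ∧ BddAbove {q : ℝ | 0 ≤ q ∧ G q = c} ∧
        IsClosed {q : ℝ | 0 ≤ q ∧ G q = c} := by
    intro c hc
    obtain ⟨R0, hR0⟩ := (hcoer_top.eventually (eventually_gt_atTop c)).exists_forall_of_atTop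
    set R := max R0 0 with hR
    have hRc : ∀ x, R ≤ x → c < G x := fun x hx => hR0 x (le_trans (le_max_left _ _) hx)
    have hR0' : (0:ℝ) ≤ R := le_max_right _ _
    constructor
    · have hsub := intermediate_value_Icc hR0' hGc.continuousOn
      have hcmem : c ∈ Icc (G 0) (G R) := ⟨by rw [hG0]; exact hc, (hRc R le_rfl).le⟩
      obtain ⟨q, hq, hqc⟩ := hsub hcmem
      exact ⟨q, hq.1, hqc⟩
    constructor
    · refine ⟨R, fun q hq => ?_⟩
      by_contra hqR
      push_neg at hqR
      exact absurd hq.2 (ne_of_gt (hRc q hqR.le))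
    · exact isClosed_Ici.inter (isClosed_eq hGc continuous_const)
  -- main argument
  intro lam hlam
  have hlb : 0 ≤ lam - β := by linarith
  obtain ⟨hAne, hAbdd, hAcl⟩ := hlevel (lam - β) hlb
  obtain ⟨hBne, hBbdd, hBcl⟩ := hlevel lam (by linarith)
  have ha : sSup {q : ℝ | 0 ≤ q ∧ G q = lam - β} ∈ {q : ℝ | 0 ≤ q ∧ G q = lam - β} :=
    hAcl.csSup_mem hAne hAbdd
  have hb : sInf {q : ℝ | 0 ≤ q ∧ G q = lam} ∈ {q : ℝ | 0 ≤ q ∧ G q = lam} :=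
    hBcl.csInf_mem hBne ⟨0, fun q hq => hq.1⟩
  set a := sSup {q : ℝ | 0 ≤ q ∧ G q = lam - β} with hadef
  set b := sInf {q : ℝ | 0 ≤ q ∧ G q = lam} with hbdef
  obtain ⟨ha0, haG⟩ := ha
  obtain ⟨hb0, hbG⟩ := hb
  have hGab : G a < G b := by rw [haG, hbG]; linarith
  by_cases hcase : lam - β < m
  · have hap1 : a < p 1 := by
      by_contra h
      push_neg at h
      have := hm_right a h
      rw [haG] at this
      linarith
    rcases lt_or_ge b (p 1) with hb1 | hb1
    · have hinc0 := hinc 0 (by omega) (by omega)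
      rw [hp0] at hinc0
      by_contra hc
      push_neg at hc
      have : G b ≤ G a := hinc0.monotoneOn ⟨hb0, hb1.le⟩ ⟨ha0, hap1.le⟩ hc
      linarith
    · exact lt_of_lt_of_le hap1 hb1
  · push_neg at hcase
    have hMlam : M < lam := by linarith
    have hb2N : p (2 * N) < b := by
      by_contra h
      push_neg at h
      have := hLM (2 * N) le_rfl b hb0 h
      rw [hbG] at this
      linarith
    rcases le_or_gt a (p (2 * N)) with h | h
    · exact lt_of_le_of_lt h hb2N
    · by_contra hc
      push_neg at hc
      have : G b ≤ G a := hlast.monotoneOn (Set.mem_Ici.mpr hb2N.le) (Set.mem_Ici.mpr h.le) hc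
      linarith
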